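/- (Weighted Carleson Lemma.) Let v be a weight on ℝ, let {λ_I}_{I∈D} be a sequence of nonnegative reals indexed by the standard dyadic grid D, and let A > 0. Then ∑_{I∈D(J)} λ_I ≤ A·v(J) holds for every J ∈ D if and only if for every nonnegative measurable function F ∈ L¹(v), ∑_{I∈D} λ_I · inf_{x∈I} F(x) ≤ A · ∫_ℝ F(x) v(x) dx. -/
import Mathlib


open MeasureTheory ENNReal

noncomputable section

/-- Average of `f` over a set `I ⊆ ℝ` with respect to Lebesgue measure. -/
def iAvg (I : Set ℝ) (f : ℝ → ℝ) : ℝ :=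
  (volume I).toReal⁻¹ * ∫ x in I, f x

/-- A weight on `ℝ`: locally integrable and a.e. positive. -/
def IsWeight1 (w : ℝ → ℝ) : Prop :=
  MeasureTheory.LocallyIntegrable w volume ∧ ∀ᵐ x : ℝ, 0 < w x

/-- The standard dyadic interval `[k 2^{-j}, (k+1) 2^{-j})`. -/
def dyadInt (j k : ℤ) : Set ℝ :=
  Set.Ico ((k : ℝ) * (2:ℝ) ^ (-j)) (((k : ℝ) + 1) * (2:ℝ) ^ (-j))



lemma dyad_meas (j k : ℤ) : MeasurableSet (dyadInt j k) := measurableSet_Ico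

lemma dyad_nonempty (j k : ℤ) : (dyadInt j k).Nonempty := by
  refine ⟨(k:ℝ) * (2:ℝ)^(-j), le_refl _, ?_⟩
  have h2 : (0:ℝ) < (2:ℝ)^(-j) := zpow_pos (by norm_num) _
  nlinarith

lemma two_zpow_split {j j' : ℤ} (h : j ≤ j') :
    (2:ℝ)^(-j) = (((2:ℤ)^((j'-j).toNat) : ℤ) : ℝ) * (2:ℝ)^(-j') := by
  push_cast
  rw [← zpow_natCast (2:ℝ), Int.toNat_of_nonneg (sub_nonneg.2 h),
    ← zpow_add₀ (two_ne_zero : (2:ℝ) ≠ 0)]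
  congr 1
  ring

lemma dyad_nested {j k j' k' : ℤ} (h : j ≤ j')
    (hne : (dyadInt j k ∩ dyadInt j' k').Nonempty) : dyadInt j' k' ⊆ dyadInt j k := by
  obtain ⟨x, ⟨hx1, hx2⟩, ⟨hx3, hx4⟩⟩ := hne
  set c : ℤ := (2:ℤ)^((j'-j).toNat) with hc
  have hsplit : (2:ℝ)^(-j) = (c : ℝ) * (2:ℝ)^(-j') := two_zpow_split h
  have h2 : (0:ℝ) < (2:ℝ)^(-j') := zpow_pos (by norm_num) _
  -- k' * 2^{-j'} ≤ x < (k+1)*2^{-j} = ((k+1)*c) * 2^{-j'}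
  have h1 : (k':ℝ) < ((k:ℝ)+1) * (c:ℝ) := by
    have : (k':ℝ) * (2:ℝ)^(-j') < ((k:ℝ)+1) * ((c:ℝ) * (2:ℝ)^(-j')) := by
      rw [← hsplit]; exact lt_of_le_of_lt hx3 hx2
    nlinarith
  have h1' : (k' : ℤ) + 1 ≤ (k+1) * c := by
    have : (k' : ℤ) < (k+1) * c := by exact_mod_cast (by push_cast; linarith : ((k':ℝ)) < (((k+1)*c : ℤ) : ℝ))
    omega
  have h3 : (k:ℝ) * (c:ℝ) < (k':ℝ) + 1 := by
    have : (k:ℝ) * ((c:ℝ) * (2:ℝ)^(-j')) < ((k':ℝ)+1) * (2:ℝ)^(-j') := by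
      rw [← hsplit]; exact lt_of_le_of_lt hx1 hx4
    nlinarith
  have h3' : k * c ≤ k' := by
    have : k * c < k' + 1 := by exact_mod_cast (by push_cast; linarith : (((k*c : ℤ)):ℝ) < ((k':ℝ)+1))
    omega
  intro y ⟨hy1, hy2⟩
  constructor
  · rw [hsplit]
    calc (k:ℝ) * ((c:ℝ) * (2:ℝ)^(-j')) = ((k*c : ℤ) : ℝ) * (2:ℝ)^(-j') := by push_cast; ring
    _ ≤ (k':ℝ) * (2:ℝ)^(-j') := by
        apply mul_le_mul_of_nonneg_right _ h2.le
        exact_mod_cast h3'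
    _ ≤ y := hy1
  · rw [hsplit]
    calc y < ((k':ℝ)+1) * (2:ℝ)^(-j') := hy2
    _ ≤ (((k+1)*c : ℤ) : ℝ) * (2:ℝ)^(-j') := by
        apply mul_le_mul_of_nonneg_right _ h2.le
        exact_mod_cast h1'
    _ = ((k:ℝ)+1) * ((c:ℝ) * (2:ℝ)^(-j')) := by push_cast; ring

/-- Finite Carleson bound: sum over any finite family of dyadic indices is bounded by
`A` times the measure of the union. -/
lemma dyad_finset_bound (μ : Measure ℝ) (lam : ℤ × ℤ → ℝ) (A : ℝ)
    (hC : ∀ j k : ℤ,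
      ∑' q : {p : ℤ × ℤ // dyadInt p.1 p.2 ⊆ dyadInt j k}, ENNReal.ofReal (lam q.1)
        ≤ ENNReal.ofReal A * μ (dyadInt j k)) :
    ∀ T : Finset (ℤ × ℤ), ∑ p ∈ T, ENNReal.ofReal (lam p)
      ≤ ENNReal.ofReal A * μ (⋃ p ∈ T, dyadInt p.1 p.2) := by
  classical
  intro T
  induction T using Finset.strongInduction with
  | _ T ih =>
    rcases T.eq_empty_or_nonempty with rfl | hTne
    · simp
    -- pick an element with minimal first coordinate
    have hne : (T.image Prod.fst).Nonempty := hTne.image _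
    obtain ⟨m, hmT, hmj⟩ : ∃ m ∈ T, m.1 = (T.image Prod.fst).min' hne :=
      Finset.mem_image.mp ((T.image Prod.fst).min'_mem hne)
    have hmin : ∀ p ∈ T, m.1 ≤ p.1 := fun p hp => by
      rw [hmj]; exact Finset.min'_le _ _ (Finset.mem_image_of_mem _ hp)
    set P : ℤ × ℤ → Prop := fun p => dyadInt p.1 p.2 ⊆ dyadInt m.1 m.2 with hP
    set Tin := T.filter P with hTin
    set Tout := T.filter (fun p => ¬ P p) with hTout
    have hsplit : ∑ p ∈ Tin, ENNReal.ofReal (lam p) + ∑ p ∈ Tout, ENNReal.ofReal (lam p)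
        = ∑ p ∈ T, ENNReal.ofReal (lam p) := Finset.sum_filter_add_sum_filter_not T P _
    -- bound on Tin via Carleson
    have hin : ∑ p ∈ Tin, ENNReal.ofReal (lam p) ≤ ENNReal.ofReal A * μ (dyadInt m.1 m.2) := by
      refine le_trans ?_ (hC m.1 m.2)
      refine le_trans ?_ (le_of_eq (tsum_subtype {p : ℤ × ℤ | dyadInt p.1 p.2 ⊆ dyadInt m.1 m.2}
        (fun p => ENNReal.ofReal (lam p))).symm)
      refine le_trans (le_of_eq ?_) (ENNReal.sum_le_tsum Tin)
      refine Finset.sum_congr rfl fun p hp => ?_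
      rw [Set.indicator_of_mem]
      exact (Finset.mem_filter.mp hp).2
    -- Tout is a strict subset
    have hmnotout : m ∉ Tout := by
      simp only [hTout, Finset.mem_filter, not_and, not_not]
      intro _; exact subset_rfl
    have hss : Tout ⊂ T :=
      ⟨Finset.filter_subset _ _, fun hsub => hmnotout (hsub hmT)⟩
    have hout := ih Tout hss
    -- D m is disjoint from the union over Tout
    have hdisj : Disjoint (dyadInt m.1 m.2) (⋃ p ∈ Tout, dyadInt p.1 p.2) := by
      rw [Set.disjoint_iUnion_right]
      intro p
      rw [Set.disjoint_iUnion_right]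
      intro hp
      rw [Set.disjoint_iff_inter_eq_empty]
      by_contra hne'
      have hnon : (dyadInt m.1 m.2 ∩ dyadInt p.1 p.2).Nonempty :=
        Set.nonempty_iff_ne_empty.mpr hne'
      have := dyad_nested (hmin p (Finset.filter_subset _ _ hp)) hnon
      exact (Finset.mem_filter.mp hp).2 this
    have hmeasout : MeasurableSet (⋃ p ∈ Tout, dyadInt p.1 p.2) :=
      Tout.measurableSet_biUnion (fun p _ => dyad_meas p.1 p.2)
    calc ∑ p ∈ T, ENNReal.ofReal (lam p)
        = ∑ p ∈ Tin, ENNReal.ofReal (lam p) + ∑ p ∈ Tout, ENNReal.ofReal (lam p) := hsplit.symm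
      _ ≤ ENNReal.ofReal A * μ (dyadInt m.1 m.2)
            + ENNReal.ofReal A * μ (⋃ p ∈ Tout, dyadInt p.1 p.2) := add_le_add hin hout
      _ = ENNReal.ofReal A * (μ (dyadInt m.1 m.2) + μ (⋃ p ∈ Tout, dyadInt p.1 p.2)) := by
            rw [mul_add]
      _ = ENNReal.ofReal A * μ (dyadInt m.1 m.2 ∪ ⋃ p ∈ Tout, dyadInt p.1 p.2) := by
            rw [measure_union hdisj hmeasout]
      _ ≤ ENNReal.ofReal A * μ (⋃ p ∈ T, dyadInt p.1 p.2) := by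
            refine mul_le_mul_right (measure_mono ?_) _
            refine Set.union_subset ?_ ?_
            · intro x hx; exact Set.mem_biUnion hmT hx
            · exact Set.iUnion₂_mono' fun p hp => ⟨p, Finset.filter_subset _ _ hp, subset_rfl⟩

/-- **Weighted Carleson Lemma.** A nonnegative sequence `{λ_I}_{I ∈ D}` is
`v`-Carleson with intensity `A` (i.e. `∑_{I ∈ D(J)} λ_I ≤ A v(J)` for all `J ∈ D`) if and
only if `∑_{I ∈ D} λ_I inf_{x ∈ I} F(x) ≤ A ∫ F v` for every nonnegative `F ∈ L¹(v)`.
Dyadic intervals are parametrized by pairs `(j,k) ∈ ℤ × ℤ`. -/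
theorem weighted_carleson_lemma (v : ℝ → ℝ) (hv : IsWeight1 v)
    (lam : ℤ × ℤ → ℝ) (hlam : ∀ p, 0 ≤ lam p) (A : ℝ) (hA : 0 < A) :
    (∀ j k : ℤ,
      ∑' q : {p : ℤ × ℤ // dyadInt p.1 p.2 ⊆ dyadInt j k}, ENNReal.ofReal (lam q.1)
        ≤ ENNReal.ofReal (A * ∫ x in dyadInt j k, v x))
    ↔
    (∀ F : ℝ → ℝ, (∀ x, 0 ≤ F x) → Measurable F →
      MeasureTheory.Integrable (fun x => F x * v x) volume →
      ∑' p : ℤ × ℤ, ENNReal.ofReal (lam p * sInf (F '' dyadInt p.1 p.2))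
        ≤ ENNReal.ofReal (A * ∫ x, F x * v x)) := by
  classical
  set μ : Measure ℝ := volume.withDensity (fun x => ENNReal.ofReal (v x)) with hμdef
  have hvint : ∀ j k : ℤ, IntegrableOn v (dyadInt j k) volume := fun j k =>
    (hv.1.integrableOn_isCompact isCompact_Icc).mono_set Set.Ico_subset_Icc_self
  have hvae : ∀ᵐ x : ℝ, 0 ≤ v x := hv.2.mono fun x hx => hx.le
  have hμdyad : ∀ j k : ℤ, ENNReal.ofReal (A * ∫ x in dyadInt j k, v x)
      = ENNReal.ofReal A * μ (dyadInt j k) := by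
    intro j k
    rw [ENNReal.ofReal_mul hA.le, hμdef, withDensity_apply _ (dyad_meas j k),
      ofReal_integral_eq_lintegral_ofReal (hvint j k) (ae_restrict_of_ae hvae)]
  constructor
  · intro hC F hF0 hFm hFint
    have hC' : ∀ j k : ℤ,
        ∑' q : {p : ℤ × ℤ // dyadInt p.1 p.2 ⊆ dyadInt j k}, ENNReal.ofReal (lam q.1)
          ≤ ENNReal.ofReal A * μ (dyadInt j k) := fun j k => (hμdyad j k) ▸ hC j k
    set s : ℤ × ℤ → ℝ := fun p => sInf (F '' dyadInt p.1 p.2) with hs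
    have hbdd : ∀ p : ℤ × ℤ, BddBelow (F '' dyadInt p.1 p.2) := fun p =>
      ⟨0, fun y ⟨x, _, hx⟩ => hx ▸ hF0 x⟩
    have hs0 : ∀ p, 0 ≤ s p := fun p =>
      le_csInf ((dyad_nonempty p.1 p.2).image F) (fun y ⟨x, _, hx⟩ => hx ▸ hF0 x)
    have hsle : ∀ p : ℤ × ℤ, ∀ x ∈ dyadInt p.1 p.2, s p ≤ F x := fun p x hx =>
      csInf_le (hbdd p) (Set.mem_image_of_mem F hx)
    have key : ∀ t : ℝ,
        ∑' p : ℤ × ℤ, (Set.Iio (s p)).indicator (fun _ => ENNReal.ofReal (lam p)) t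
          ≤ ENNReal.ofReal A * μ {x | t < F x} := by
      intro t
      refine Summable.tsum_le_of_sum_le ENNReal.summable fun T => ?_
      have heq : ∑ p ∈ T, (Set.Iio (s p)).indicator (fun _ => ENNReal.ofReal (lam p)) t
          = ∑ p ∈ T.filter (fun p => t < s p), ENNReal.ofReal (lam p) := by
        rw [Finset.sum_filter]
        refine Finset.sum_congr rfl fun p _ => ?_
        by_cases h : t < s p <;> simp [Set.indicator_apply, Set.mem_Iio, h]
      rw [heq]
      refine le_trans (dyad_finset_bound μ lam A hC' _) (mul_le_mul_right (measure_mono ?_) _)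
      refine Set.iUnion₂_subset fun p hp x hx => ?_
      exact lt_of_lt_of_le (Finset.mem_filter.mp hp).2 (hsle p x hx)
    have hFvae : 0 ≤ᵐ[volume] fun x => F x * v x :=
      hvae.mono fun x hx => mul_nonneg (hF0 x) hx
    have hvaem : AEMeasurable (fun x => ENNReal.ofReal (v x)) volume :=
      ENNReal.measurable_ofReal.comp_aemeasurable hv.1.aestronglyMeasurable.aemeasurable
    calc ∑' p : ℤ × ℤ, ENNReal.ofReal (lam p * s p)
        = ∑' p : ℤ × ℤ, ∫⁻ t in Set.Ioi (0:ℝ),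
            (Set.Iio (s p)).indicator (fun _ => ENNReal.ofReal (lam p)) t := by
          refine tsum_congr fun p => ?_
          rw [lintegral_indicator measurableSet_Iio,
            Measure.restrict_restrict measurableSet_Iio, Set.Iio_inter_Ioi,
            setLIntegral_const, Real.volume_Ioo, sub_zero,
            ← ENNReal.ofReal_mul (hlam p)]
      _ = ∫⁻ t in Set.Ioi (0:ℝ), ∑' p : ℤ × ℤ,
            (Set.Iio (s p)).indicator (fun _ => ENNReal.ofReal (lam p)) t :=
          (lintegral_tsum fun p => (measurable_const.indicator measurableSet_Iio).aemeasurable).symm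
      _ ≤ ∫⁻ t in Set.Ioi (0:ℝ), ENNReal.ofReal A * μ {x | t < F x} :=
          lintegral_mono fun t => key t
      _ = ENNReal.ofReal A * ∫⁻ t in Set.Ioi (0:ℝ), μ {x | t < F x} :=
          lintegral_const_mul' _ _ ENNReal.ofReal_ne_top
      _ = ENNReal.ofReal A * ∫⁻ x, ENNReal.ofReal (F x) ∂μ := by
          rw [lintegral_eq_lintegral_meas_lt μ (Filter.Eventually.of_forall hF0) hFm.aemeasurable]
      _ = ENNReal.ofReal A * ∫⁻ x, ENNReal.ofReal (F x * v x) := by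
          rw [hμdef, lintegral_withDensity_eq_lintegral_mul₀ hvaem
            (show AEMeasurable (fun x => ENNReal.ofReal (F x)) volume from
              (ENNReal.measurable_ofReal.comp hFm).aemeasurable)]
          congr 1
          refine lintegral_congr fun x => ?_
          simp only [Pi.mul_apply]
          rw [← ENNReal.ofReal_mul' (hF0 x)]
          ring_nf
      _ = ENNReal.ofReal A * ENNReal.ofReal (∫ x, F x * v x) := by
          rw [ofReal_integral_eq_lintegral_ofReal hFint hFvae]
      _ = ENNReal.ofReal (A * ∫ x, F x * v x) := (ENNReal.ofReal_mul hA.le).symm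
  · intro h j k
    set J := dyadInt j k with hJ
    set F : ℝ → ℝ := J.indicator (fun _ => 1) with hF
    have hF0 : ∀ x, 0 ≤ F x := fun x => Set.indicator_nonneg (fun _ _ => zero_le_one) x
    have hFm : Measurable F := measurable_const.indicator (dyad_meas j k)
    have hFveq : (fun x => F x * v x) = J.indicator v := by
      funext x
      by_cases hx : x ∈ J <;>
        simp [hF, Set.indicator_of_mem, Set.indicator_of_notMem, hx]
    have hFint : Integrable (fun x => F x * v x) volume := by
      rw [hFveq]
      exact (integrable_indicator_iff (dyad_meas j k)).2 (hvint j k)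
    have hmain := h F hF0 hFm hFint
    have hpt : ∀ p : ℤ × ℤ, ENNReal.ofReal (lam p * sInf (F '' dyadInt p.1 p.2))
        = Set.indicator {p : ℤ × ℤ | dyadInt p.1 p.2 ⊆ J}
            (fun p => ENNReal.ofReal (lam p)) p := by
      intro p
      by_cases hp : dyadInt p.1 p.2 ⊆ J
      · have himg : F '' dyadInt p.1 p.2 = {1} := by
          apply Set.Subset.antisymm
          · rintro y ⟨x, hx, rfl⟩
            simp [hF, Set.indicator_of_mem (hp hx)]
          · intro y hy
            rw [Set.mem_singleton_iff] at hy
            subst hy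
            obtain ⟨x, hx⟩ := dyad_nonempty p.1 p.2
            exact ⟨x, hx, Set.indicator_of_mem (hp hx) _⟩
        rw [himg, csInf_singleton, mul_one]
        exact (Set.indicator_of_mem (show p ∈ {p : ℤ × ℤ | dyadInt p.1 p.2 ⊆ J} from hp) (fun p : ℤ × ℤ => ENNReal.ofReal (lam p))).symm
      · obtain ⟨x, hx, hxJ⟩ := Set.not_subset.mp hp
        have h0mem : (0:ℝ) ∈ F '' dyadInt p.1 p.2 :=
          ⟨x, hx, by simp [hF, Set.indicator_of_notMem hxJ]⟩
        have hinf0 : sInf (F '' dyadInt p.1 p.2) = 0 :=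
          le_antisymm (csInf_le ⟨0, fun y ⟨z, _, hz⟩ => hz ▸ hF0 z⟩ h0mem)
            (le_csInf ⟨0, h0mem⟩ fun y ⟨z, _, hz⟩ => hz ▸ hF0 z)
        rw [hinf0, mul_zero, ENNReal.ofReal_zero]
        exact (Set.indicator_of_notMem
          (show p ∉ {p : ℤ × ℤ | dyadInt p.1 p.2 ⊆ J} from hp) (fun p : ℤ × ℤ => ENNReal.ofReal (lam p))).symm
    have hIeq : (∫ x, F x * v x) = ∫ x in J, v x := by
      rw [hFveq, integral_indicator (dyad_meas j k)]
    calc ∑' q : {p : ℤ × ℤ // dyadInt p.1 p.2 ⊆ dyadInt j k}, ENNReal.ofReal (lam q.1)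
        = ∑' p : ℤ × ℤ, Set.indicator {p : ℤ × ℤ | dyadInt p.1 p.2 ⊆ J}
            (fun p => ENNReal.ofReal (lam p)) p :=
          tsum_subtype {p : ℤ × ℤ | dyadInt p.1 p.2 ⊆ J} (fun p => ENNReal.ofReal (lam p))
      _ = ∑' p : ℤ × ℤ, ENNReal.ofReal (lam p * sInf (F '' dyadInt p.1 p.2)) :=
          tsum_congr fun p => (hpt p).symm
      _ ≤ ENNReal.ofReal (A * ∫ x, F x * v x) := hmain
      _ = ENNReal.ofReal (A * ∫ x in dyadInt j k, v x) := by rw [hIeq]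

end
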